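/- For any complex number c = a + ib with a ≤ 0, b ≥ 0, and c ≠ 0, the improper integral ∫_{-∞}^{∞} e^{(c/2)x²} dx exists and equals √(2π/(-c)) (principal branch of the square root). -/

import Mathlib

open MeasureTheory Filter Real


lemma norm_cexp_le_one {γ : ℂ} (hγ : γ.re ≤ 0) (x : ℝ) :
    ‖Complex.exp (γ / 2 * (x : ℂ) ^ 2)‖ ≤ 1 := by
  rw [Complex.norm_exp]
  apply Real.exp_le_one_iff.mpr
  have h : γ / 2 * (x : ℂ) ^ 2 = ((x ^ 2 / 2 : ℝ) : ℂ) * γ := by push_cast; ring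
  rw [h, Complex.re_ofReal_mul]
  nlinarith [sq_nonneg x]

lemma hasDerivAt_cexp_quadratic (γ : ℂ) (x : ℝ) :
    HasDerivAt (fun y : ℝ => Complex.exp (γ / 2 * (y : ℂ) ^ 2))
      (γ * x * Complex.exp (γ / 2 * (x : ℂ) ^ 2)) x := by
  have h0 : HasDerivAt (fun y : ℝ => ((y ^ 2 : ℝ) : ℂ)) ((2 * x : ℝ) : ℂ) x := by
    have := hasDerivAt_pow 2 x
    simpa using this.ofReal_comp
  have h1 : HasDerivAt (fun y : ℝ => γ / 2 * ((y ^ 2 : ℝ) : ℂ)) (γ / 2 * ((2 * x : ℝ) : ℂ)) x :=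
    h0.const_mul (γ / 2)
  have h2 := h1.cexp
  have hfun : (fun y : ℝ => Complex.exp (γ / 2 * ((y ^ 2 : ℝ) : ℂ)))
      = (fun y : ℝ => Complex.exp (γ / 2 * (y : ℂ) ^ 2)) := by
    funext y; push_cast; ring_nf
  rw [hfun] at h2
  convert h2 using 1
  push_cast
  ring

lemma tail_bound {γ : ℂ} (hγ : γ.re ≤ 0) (hγ0 : γ ≠ 0) {R S : ℝ}
    (hR : 1 ≤ R) (hRS : R ≤ S) :
    ‖∫ x in R..S, Complex.exp (γ / 2 * (x : ℂ) ^ 2)‖ ≤ 3 / (‖γ‖ * R) := by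
  have hγn : 0 < ‖γ‖ := norm_pos_iff.mpr hγ0
  have hR0 : 0 < R := lt_of_lt_of_le one_pos hR
  have hS0 : 0 < S := lt_of_lt_of_le hR0 hRS
  set u : ℝ → ℂ := fun x => γ⁻¹ * ((x⁻¹ : ℝ) : ℂ) with hu_def
  set v : ℝ → ℂ := fun x => Complex.exp (γ / 2 * (x : ℂ) ^ 2) with hv_def
  set u' : ℝ → ℂ := fun x => γ⁻¹ * ((-(x ^ 2)⁻¹ : ℝ) : ℂ) with hu'_def
  set v' : ℝ → ℂ := fun x => γ * x * Complex.exp (γ / 2 * (x : ℂ) ^ 2) with hv'_def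
  have hxpos : ∀ x ∈ Set.uIcc R S, (0:ℝ) < x := by
    intro x hx
    rw [Set.uIcc_of_le hRS] at hx
    exact lt_of_lt_of_le hR0 hx.1
  have hu : ∀ x ∈ Set.uIcc R S, HasDerivAt u (u' x) x := by
    intro x hx
    have h0 : HasDerivAt (fun y : ℝ => y⁻¹) (-(x ^ 2)⁻¹) x := hasDerivAt_inv (hxpos x hx).ne'
    exact (h0.ofReal_comp).const_mul γ⁻¹
  have hv : ∀ x ∈ Set.uIcc R S, HasDerivAt v (v' x) x := fun x _ => hasDerivAt_cexp_quadratic γ x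
  have hcont_u' : ContinuousOn u' (Set.uIcc R S) :=
    continuousOn_const.mul ((Complex.continuous_ofReal.comp_continuousOn
      (((continuousOn_id.pow 2).inv₀ (fun x hx => pow_ne_zero 2 (hxpos x hx).ne')).neg)))
  have hcont_v' : ContinuousOn v' (Set.uIcc R S) := by
    apply ContinuousOn.mul
    · exact continuousOn_const.mul Complex.continuous_ofReal.continuousOn
    · exact (Complex.continuous_exp.comp (by continuity)).continuousOn
  have hiu' : IntervalIntegrable u' volume R S := hcont_u'.intervalIntegrable
  have hiv' : IntervalIntegrable v' volume R S := hcont_v'.intervalIntegrable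
  have ibp := intervalIntegral.integral_mul_deriv_eq_deriv_mul hu hv hiu' hiv'
  have key : ∫ x in R..S, v x = u S * v S - u R * v R - ∫ x in R..S, u' x * v x := by
    rw [← ibp]
    apply intervalIntegral.integral_congr
    intro x hx
    have hx0 : (x:ℂ) ≠ 0 := by exact_mod_cast (hxpos x hx).ne'
    simp only [u, v, v', hu_def, hv_def, hv'_def]
    push_cast
    field_simp
  rw [show (∫ x in R..S, Complex.exp (γ / 2 * (x : ℂ) ^ 2)) = ∫ x in R..S, v x from rfl, key]
  have hnu : ∀ x : ℝ, 0 < x → ‖u x‖ = 1 / (‖γ‖ * x) := by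
    intro x hx
    rw [hu_def]
    simp only [norm_mul, norm_inv, Complex.norm_real, Real.norm_eq_abs]
    rw [abs_of_pos hx, one_div, mul_inv]
  have hbound3 : ‖∫ x in R..S, u' x * v x‖ ≤ 1 / (‖γ‖ * R) := by
    have hle : ∀ᵐ t ∂(volume.restrict <| Set.uIoc R S),
        ‖u' t * v t‖ ≤ (1/‖γ‖) * (t ^ 2)⁻¹ := by
      apply ae_restrict_of_forall_mem measurableSet_uIoc
      intro x hx
      rw [Set.uIoc_of_le hRS] at hx
      have hx0 : 0 < x := lt_of_lt_of_le hR0 (le_of_lt hx.1)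
      have hnu' : ‖u' x‖ = (1/‖γ‖) * (x ^ 2)⁻¹ := by
        rw [hu'_def]
        simp only [norm_mul, norm_inv, Complex.norm_real, Real.norm_eq_abs, abs_neg]
        rw [abs_of_pos (by positivity : (0:ℝ) < (x^2)⁻¹), one_div]
      rw [norm_mul, hnu']
      calc (1/‖γ‖) * (x^2)⁻¹ * ‖v x‖ ≤ (1/‖γ‖) * (x^2)⁻¹ * 1 := by
            apply mul_le_mul_of_nonneg_left (norm_cexp_le_one hγ x) (by positivity)
        _ = (1/‖γ‖) * (x ^ 2)⁻¹ := mul_one _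
    have hcont_g : ContinuousOn (fun t : ℝ => (t ^ 2)⁻¹) (Set.uIcc R S) :=
      (continuousOn_id.pow 2).inv₀ (fun x hx => pow_ne_zero 2 (hxpos x hx).ne')
    have hgint : IntervalIntegrable (fun t : ℝ => (1/‖γ‖) * (t ^ 2)⁻¹) volume R S :=
      (hcont_g.intervalIntegrable).const_mul _
    refine le_trans (intervalIntegral.norm_integral_le_abs_of_norm_le hle hgint) ?_
    have hint : (∫ x in R..S, ((x:ℝ) ^ 2)⁻¹) = R⁻¹ - S⁻¹ := by
      have hder : ∀ x ∈ Set.uIcc R S, HasDerivAt (fun y : ℝ => -y⁻¹) ((x ^ 2)⁻¹) x := by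
        intro x hx
        have h := (hasDerivAt_inv (hxpos x hx).ne').neg
        simp only [neg_neg] at h
        exact h
      rw [intervalIntegral.integral_eq_sub_of_hasDerivAt hder hcont_g.intervalIntegrable]
      ring
    rw [intervalIntegral.integral_const_mul, hint]
    have hRS' : S⁻¹ ≤ R⁻¹ := inv_anti₀ hR0 hRS
    have hS' : (0:ℝ) < S⁻¹ := by positivity
    have hd : (0:ℝ) ≤ R⁻¹ - S⁻¹ := by linarith
    rw [abs_of_nonneg (mul_nonneg (by positivity) hd)]
    rw [one_div, one_div, mul_inv]
    exact mul_le_mul_of_nonneg_left (by linarith) (by positivity)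
  have hterm : ∀ x : ℝ, 0 < x → ‖u x * v x‖ ≤ 1 / (‖γ‖ * x) := by
    intro x hx
    rw [norm_mul, hnu x hx]
    calc 1 / (‖γ‖ * x) * ‖v x‖ ≤ 1 / (‖γ‖ * x) * 1 :=
        mul_le_mul_of_nonneg_left (norm_cexp_le_one hγ x) (by positivity)
      _ = 1 / (‖γ‖ * x) := mul_one _
  have h3eq : 3 / (‖γ‖ * R) = 1 / (‖γ‖ * R) + 1 / (‖γ‖ * R) + 1 / (‖γ‖ * R) := by ring
  have h1 : 1 / (‖γ‖ * S) ≤ 1 / (‖γ‖ * R) := by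
    apply div_le_div_of_nonneg_left one_pos.le (by positivity)
    exact mul_le_mul_of_nonneg_left hRS hγn.le
  calc ‖u S * v S - u R * v R - ∫ x in R..S, u' x * v x‖
      ≤ ‖u S * v S - u R * v R‖ + ‖∫ x in R..S, u' x * v x‖ := norm_sub_le _ _
    _ ≤ ‖u S * v S‖ + ‖u R * v R‖ + ‖∫ x in R..S, u' x * v x‖ := by
        gcongr; exact norm_sub_le _ _
    _ ≤ 1 / (‖γ‖ * S) + 1 / (‖γ‖ * R) + 1 / (‖γ‖ * R) := by
        gcongr
        · exact hterm S hS0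
        · exact hterm R hR0
    _ ≤ 3 / (‖γ‖ * R) := by rw [h3eq]; linarith



/-- interval integrability of the Fresnel-type integrand -/
lemma fres_intble (γ : ℂ) (p q : ℝ) :
    IntervalIntegrable (fun x : ℝ => Complex.exp (γ / 2 * (x : ℂ) ^ 2)) volume p q :=
  ((Complex.continuous_exp.comp (by continuity)).continuousOn).intervalIntegrable

lemma diff_bound {c : ℂ} (hc : c.re ≤ 0) {t R : ℝ} (ht : 0 ≤ t) (hR : 0 ≤ R) :
    ‖(∫ x in (-R)..R, Complex.exp (c / 2 * (x : ℂ) ^ 2))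
      - ∫ x in (-R)..R, Complex.exp ((c - t) / 2 * (x : ℂ) ^ 2)‖ ≤ t * R ^ 3 := by
  rw [← intervalIntegral.integral_sub (fres_intble c _ _) (fres_intble (c - t) _ _)]
  have key : ∀ x ∈ Set.uIoc (-R) R,
      ‖Complex.exp (c / 2 * (x : ℂ) ^ 2) - Complex.exp ((c - t) / 2 * (x : ℂ) ^ 2)‖
        ≤ t * R ^ 2 / 2 := by
    intro x hx
    have hxR : x ^ 2 ≤ R ^ 2 := by
      rw [Set.uIoc_of_le (by linarith : -R ≤ R)] at hx
      nlinarith [hx.1, hx.2]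
    have hsplit : Complex.exp ((c - t) / 2 * (x : ℂ) ^ 2)
        = Complex.exp (c / 2 * (x : ℂ) ^ 2) * ((Real.exp (-(t * x ^ 2 / 2)) : ℝ) : ℂ) := by
      rw [Complex.ofReal_exp, ← Complex.exp_add]
      congr 1
      push_cast
      ring
    rw [hsplit, ← mul_one (Complex.exp (c / 2 * (x : ℂ) ^ 2)), mul_assoc, ← mul_sub]
    rw [norm_mul, one_mul]
    have h1 : ‖(1 : ℂ) - ((Real.exp (-(t * x ^ 2 / 2)) : ℝ) : ℂ)‖ = 1 - Real.exp (-(t * x ^ 2 / 2)) := by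
      rw [show (1 : ℂ) - ((Real.exp (-(t * x ^ 2 / 2)) : ℝ) : ℂ)
          = (((1 - Real.exp (-(t * x ^ 2 / 2)) : ℝ)) : ℂ) by push_cast; ring]
      rw [Complex.norm_real, Real.norm_eq_abs, abs_of_nonneg]
      have := Real.exp_le_one_iff.mpr (by nlinarith [sq_nonneg x] : -(t * x ^ 2 / 2) ≤ 0)
      linarith
    have h2 : 1 - Real.exp (-(t * x ^ 2 / 2)) ≤ t * x ^ 2 / 2 := by
      have := Real.add_one_le_exp (-(t * x ^ 2 / 2))
      linarith
    calc ‖Complex.exp (c / 2 * (x : ℂ) ^ 2)‖ * ‖(1:ℂ) - ((Real.exp (-(t * x ^ 2 / 2)) : ℝ) : ℂ)‖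
        ≤ 1 * ‖(1:ℂ) - ((Real.exp (-(t * x ^ 2 / 2)) : ℝ) : ℂ)‖ :=
          mul_le_mul_of_nonneg_right (norm_cexp_le_one hc x) (norm_nonneg _)
      _ = 1 - Real.exp (-(t * x ^ 2 / 2)) := by rw [one_mul, h1]
      _ ≤ t * x ^ 2 / 2 := h2
      _ ≤ t * R ^ 2 / 2 := by nlinarith
  have := intervalIntegral.norm_integral_le_of_norm_le_const key
  calc ‖∫ x in (-R)..R, (Complex.exp (c / 2 * (x : ℂ) ^ 2)
          - Complex.exp ((c - t) / 2 * (x : ℂ) ^ 2))‖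
      ≤ t * R ^ 2 / 2 * |R - (-R)| := this
    _ = t * R ^ 3 := by rw [abs_of_nonneg (by linarith : (0:ℝ) ≤ R - (-R))]; ring




lemma full_tail {γ : ℂ} (hγ : γ.re < 0) {R : ℝ} (hR : 1 ≤ R) :
    ‖(∫ x : ℝ, Complex.exp (γ / 2 * (x : ℂ) ^ 2))
      - ∫ x in (-R)..R, Complex.exp (γ / 2 * (x : ℂ) ^ 2)‖ ≤ 6 / (‖γ‖ * R) := by
  set f : ℝ → ℂ := fun x => Complex.exp (γ / 2 * (x : ℂ) ^ 2) with hf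
  have hγ0 : γ ≠ 0 := fun h => by simp [h] at hγ
  have hbre : 0 < (-(γ / 2)).re := by
    simp only [Complex.neg_re]
    have : (γ / 2).re = γ.re / 2 := by
      rw [Complex.div_re]
      simp [Complex.normSq]
      ring
    rw [this]; linarith
  have hint : Integrable f := by
    have := integrable_cexp_neg_mul_sq hbre
    simpa using this
  have hT : Tendsto (fun S : ℝ => ∫ x in (-S)..S, f x) atTop (nhds (∫ x : ℝ, f x)) :=
    intervalIntegral_tendsto_integral hint tendsto_neg_atTop_atBot tendsto_id
  have h1 : Tendsto (fun S : ℝ => ‖(∫ x in (-S)..S, f x) - ∫ x in (-R)..R, f x‖) atTop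
      (nhds ‖(∫ x : ℝ, f x) - ∫ x in (-R)..R, f x‖) := ((hT.sub_const _).norm)
  apply le_of_tendsto h1
  filter_upwards [eventually_ge_atTop R] with S hS
  have hsplit : (∫ x in (-S)..S, f x) - (∫ x in (-R)..R, f x)
      = (∫ x in (-S)..(-R), f x) + ∫ x in R..S, f x := by
    have e1 := intervalIntegral.integral_add_adjacent_intervals
      (fres_intble γ (-S) (-R)) (fres_intble γ (-R) R)
    have e2 := intervalIntegral.integral_add_adjacent_intervals
      (a := -S) (b := R) (c := S) ((fres_intble γ (-S) (-R)).trans (fres_intble γ (-R) R))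
      (fres_intble γ R S)
    rw [← e2, ← e1]
    ring
  have hneg : (∫ x in (-S)..(-R), f x) = ∫ x in R..S, f x := by
    rw [← intervalIntegral.integral_comp_neg (f := f)]
    apply intervalIntegral.integral_congr
    intro x hx
    simp only [f, hf]
    norm_num
  rw [hsplit, hneg]
  have htb := tail_bound (le_of_lt hγ) hγ0 hR hS
  calc ‖(∫ x in R..S, f x) + ∫ x in R..S, f x‖ ≤ ‖∫ x in R..S, f x‖ + ‖∫ x in R..S, f x‖ :=
      norm_add_le _ _
    _ ≤ 3 / (‖γ‖ * R) + 3 / (‖γ‖ * R) := add_le_add htb htb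
    _ = 6 / (‖γ‖ * R) := by ring


lemma gauss_val {c : ℂ} (hcre : c.re ≤ 0) {t : ℝ} (ht : 0 < t) :
    (∫ x : ℝ, Complex.exp ((c - t) / 2 * (x : ℂ) ^ 2))
      = ((2 * (π : ℂ)) / ((t : ℂ) - c)) ^ ((1 : ℂ) / 2) := by
  have hb : 0 < (((t : ℂ) - c) / 2).re := by
    have : (((t : ℂ) - c) / 2).re = (t - c.re) / 2 := by
      rw [Complex.div_re]
      simp [Complex.normSq]
      ring
    rw [this]; linarith
  have hb0 : ((t : ℂ) - c) ≠ 0 := by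
    intro h
    rw [h] at hb
    simp at hb
  have := integral_gaussian_complex hb
  have heq : (fun x : ℝ => Complex.exp (-(((t : ℂ) - c) / 2) * (x : ℂ) ^ 2))
      = fun x : ℝ => Complex.exp ((c - t) / 2 * (x : ℂ) ^ 2) := by
    funext x; congr 1; ring
  rw [heq] at this
  rw [this]
  congr 1
  field_simp

lemma cont_lemma {c : ℂ} (hc0 : c ≠ 0) (hre : c.re ≤ 0) (him : 0 ≤ c.im) :
    Tendsto (fun t : ℝ => ((2 * (π : ℂ)) / ((t : ℂ) - c)) ^ ((1 : ℂ) / 2))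
      (nhdsWithin 0 (Set.Ioi 0)) (nhds (((2 * (π : ℂ)) / (-c)) ^ ((1 : ℂ) / 2))) := by
  have hval : (2 * (π : ℂ)) / (((0 : ℝ) : ℂ) - c) = (2 * (π : ℂ)) / (-c) := by
    norm_num
  have h0 : ContinuousAt (fun t : ℝ => (2 * (π : ℂ)) / ((t : ℂ) - c)) 0 := by
    apply ContinuousAt.div continuousAt_const
    · exact (Complex.continuous_ofReal.continuousAt).sub continuousAt_const
    · simpa using (neg_ne_zero.mpr hc0)
  have hslit : (2 * (π : ℂ)) / (-c) ∈ Complex.slitPlane := by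
    rw [Complex.mem_slitPlane_iff]
    have hns : 0 < Complex.normSq (-c) := by
      rw [Complex.normSq_pos]; exact neg_ne_zero.mpr hc0
    have hre' : ((2 * (π : ℂ)) / (-c)).re = 2 * π * (-c.re) / Complex.normSq (-c) := by
      rw [Complex.div_re]
      simp
      try ring
    have him' : ((2 * (π : ℂ)) / (-c)).im = 2 * π * c.im / Complex.normSq (-c) := by
      rw [Complex.div_im]
      simp
      try ring
    rcases lt_or_eq_of_le hre with h | h
    · left
      rw [hre']
      have : 0 < -c.re := by linarith
      positivity
    · right
      rw [him']
      have hb : c.im ≠ 0 := by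
        intro hb0
        apply hc0
        apply Complex.ext <;> simp [← h, hb0]
      have : c.im > 0 := lt_of_le_of_ne him (Ne.symm hb)
      positivity
  have h1 : ContinuousAt (fun z : ℂ => z ^ ((1 : ℂ) / 2)) ((2 * (π : ℂ)) / (-c)) :=
    continuousAt_cpow_const hslit
  have h0' : Tendsto (fun t : ℝ => (2 * (π : ℂ)) / ((t : ℂ) - c))
      (nhdsWithin 0 (Set.Ioi 0)) (nhds ((2 * (π : ℂ)) / (-c))) := by
    have := h0.tendsto
    rw [show ((0:ℝ):ℂ) - c = -c by simp] at this
    exact this.mono_left nhdsWithin_le_nhds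
  exact (h1.tendsto).comp h0' 


/-- For `c = a + ib` with `a ≤ 0`, `b ≥ 0`, `c ≠ 0`, the improper integral
`∫_{-∞}^{∞} e^{(c/2)x²} dx` exists and equals `√(2π/(-c))` (principal branch). -/
theorem fresnel_integral_general (a b : ℝ) (ha : a ≤ 0) (hb : 0 ≤ b)
    (c : ℂ) (hc : c = (a : ℂ) + (b : ℂ) * Complex.I) (hc0 : c ≠ 0) :
    Tendsto (fun R : ℝ => ∫ x in (-R)..R, Complex.exp (c / 2 * (x : ℂ) ^ 2))
      atTop
      (nhds (((2 * (Real.pi : ℂ)) / (-c)) ^ ((1 : ℂ) / 2))) := by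
  have hcre : c.re ≤ 0 := by rw [hc]; simpa using ha
  have hcim : 0 ≤ c.im := by rw [hc]; simpa using hb
  set L := ((2 * (Real.pi : ℂ)) / (-c)) ^ ((1 : ℂ) / 2) with hL
  rw [Metric.tendsto_atTop]
  intro ε hε
  have hcn : 0 < ‖c‖ := norm_pos_iff.mpr hc0
  refine ⟨max 1 (18 / (‖c‖ * ε)), fun R hR => ?_⟩
  have hR1 : 1 ≤ R := le_trans (le_max_left _ _) hR
  have hR0 : 0 < R := lt_of_lt_of_le one_pos hR1
  have htail : 6 / (‖c‖ * R) ≤ ε / 3 := by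
    have h18 : 18 / (‖c‖ * ε) ≤ R := le_trans (le_max_right _ _) hR
    have h18' : 18 ≤ R * (‖c‖ * ε) := (div_le_iff₀ (by positivity)).mp h18
    rw [div_le_div_iff₀ (by positivity) (by norm_num)]
    nlinarith
  -- choose a small regularization parameter t
  have hev1 := Metric.tendsto_nhds.mp (cont_lemma hc0 hcre hcim) (ε / 3) (by positivity)
  have hev2 : ∀ᶠ t in nhdsWithin (0:ℝ) (Set.Ioi 0), t * R ^ 3 < ε / 3 := by
    have h1 : Tendsto (fun t : ℝ => t * R ^ 3) (nhds 0) (nhds 0) := by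
      have := (continuous_mul_right (R ^ 3)).tendsto 0
      simpa using this
    have h2 := Metric.tendsto_nhds.mp (h1.mono_left (nhdsWithin_le_nhds (s := Set.Ioi 0))) (ε / 3) (by positivity)
    filter_upwards [h2] with t h
    rw [Real.dist_eq, sub_zero] at h
    exact lt_of_le_of_lt (le_abs_self _) h
  have hev3 : ∀ᶠ t in nhdsWithin (0:ℝ) (Set.Ioi 0), t ∈ Set.Ioi 0 :=
    eventually_mem_nhdsWithin
  obtain ⟨t, h1, h2, ht0⟩ := (hev1.and (hev2.and hev3)).exists
  rw [Set.mem_Ioi] at ht0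
  set γ := c - (t : ℂ) with hγ
  have hγre : γ.re < 0 := by
    rw [hγ]
    simp only [Complex.sub_re, Complex.ofReal_re]
    linarith
  have hγnorm : ‖c‖ ≤ ‖γ‖ := by
    have e1 : ‖γ‖ ^ 2 = (c.re - t) ^ 2 + c.im ^ 2 := by
      rw [Complex.sq_norm, Complex.normSq_apply, hγ]
      simp only [Complex.sub_re, Complex.sub_im, Complex.ofReal_re, Complex.ofReal_im]
      ring
    have e2 : ‖c‖ ^ 2 = c.re ^ 2 + c.im ^ 2 := by
      rw [Complex.sq_norm, Complex.normSq_apply]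
      ring
    have hsq : ‖c‖ ^ 2 ≤ ‖γ‖ ^ 2 := by
      rw [e1, e2]
      nlinarith
    exact (pow_le_pow_iff_left₀ (norm_nonneg _) (norm_nonneg _) (by norm_num)).mp hsq
  have hd1 : ‖(∫ x in (-R)..R, Complex.exp (c / 2 * (x : ℂ) ^ 2))
      - ∫ x in (-R)..R, Complex.exp (γ / 2 * (x : ℂ) ^ 2)‖ ≤ t * R ^ 3 := by
    have := diff_bound hcre (le_of_lt ht0) (le_of_lt hR0)
    rw [hγ]
    exact this
  have hd2 : ‖(∫ x : ℝ, Complex.exp (γ / 2 * (x : ℂ) ^ 2))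
      - ∫ x in (-R)..R, Complex.exp (γ / 2 * (x : ℂ) ^ 2)‖ ≤ 6 / (‖c‖ * R) := by
    refine le_trans (full_tail hγre hR1) ?_
    apply div_le_div_of_nonneg_left (by norm_num) (by positivity)
    exact mul_le_mul_of_nonneg_right hγnorm (le_of_lt hR0)
  have hd3 : ‖(∫ x : ℝ, Complex.exp (γ / 2 * (x : ℂ) ^ 2)) - L‖ < ε / 3 := by
    have hgv : (∫ x : ℝ, Complex.exp (γ / 2 * (x : ℂ) ^ 2))
        = ((2 * (π : ℂ)) / ((t : ℂ) - c)) ^ ((1 : ℂ) / 2) := by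
      rw [hγ]
      exact gauss_val hcre ht0
    rw [hgv, ← dist_eq_norm]
    exact h1
  rw [dist_eq_norm]
  have hsplit : (∫ x in (-R)..R, Complex.exp (c / 2 * (x : ℂ) ^ 2)) - L
      = ((∫ x in (-R)..R, Complex.exp (c / 2 * (x : ℂ) ^ 2))
          - ∫ x in (-R)..R, Complex.exp (γ / 2 * (x : ℂ) ^ 2))
        + (((∫ x in (-R)..R, Complex.exp (γ / 2 * (x : ℂ) ^ 2))
          - ∫ x : ℝ, Complex.exp (γ / 2 * (x : ℂ) ^ 2))
        + ((∫ x : ℝ, Complex.exp (γ / 2 * (x : ℂ) ^ 2)) - L)) := by ring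
  rw [hsplit]
  calc ‖_ + (_ + _)‖ ≤ ‖(∫ x in (-R)..R, Complex.exp (c / 2 * (x : ℂ) ^ 2))
          - ∫ x in (-R)..R, Complex.exp (γ / 2 * (x : ℂ) ^ 2)‖
        + (‖(∫ x in (-R)..R, Complex.exp (γ / 2 * (x : ℂ) ^ 2))
          - ∫ x : ℝ, Complex.exp (γ / 2 * (x : ℂ) ^ 2)‖
        + ‖(∫ x : ℝ, Complex.exp (γ / 2 * (x : ℂ) ^ 2)) - L‖) :=
      le_trans (norm_add_le _ _) (by gcongr; exact norm_add_le _ _)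
    _ < ε / 3 + (ε / 3 + ε / 3) := by
        apply add_lt_add_of_lt_of_le (lt_of_le_of_lt hd1 h2)
        apply add_le_add ?_ hd3.le
        rw [norm_sub_rev]
        exact le_trans hd2 htail
    _ = ε := by ring
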